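/- Consider the weak greedy setup: H a real Hilbert space, 𝒢 a nonempty index set, and for each g ∈ 𝒢 orthonormal vectors e₀(g), e₁(g) ∈ H; for f ∈ H set P(g, f) = ⟨f, e₀(g)⟩² + ⟨f, e₁(g)⟩² and Π_g f = ⟨f, e₀(g)⟩ e₀(g) + ⟨f, e₁(g)⟩ e₁(g). Let t ∈ (0,1], γ ∈ (0,1], m ∈ H, m₀ = m, and for each s ≥ 1 let g_s ∈ 𝒢 satisfy P(g_s, m_{s−1}) ≥ t · sup_{g∈𝒢} P(g, m_{s−1}), with m_s = m_{s−1} − γ Π_{g_s} m_{s−1}. If m lies in the closed linear span of {e_l(g) : g ∈ 𝒢, l ∈ {0,1}}, then lim_{s→∞} ‖m_s‖ = 0; equivalently, the boosting approximants γ ∑_{s=1}^{M} Π_{g_s} m_{s−1} converge to m in H as M → ∞. -/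

import Mathlib

open Filter
open scoped RealInnerProductSpace

lemma stmt10_freq (a : ℕ → ℝ) (ha : ∀ n, 0 ≤ a n) (hsum : Summable a) {ε : ℝ} (hε : 0 < ε) :
    ∃ᶠ s in atTop, Real.sqrt (a s) * ∑ j ∈ Finset.range s, Real.sqrt (a j) < ε := by
  by_contra hcon
  rw [Filter.not_frequently] at hcon
  obtain ⟨N, hN⟩ := eventually_atTop.1 hcon
  set b : ℕ → ℝ := fun n => Real.sqrt (a n) with hb
  set S : ℕ → ℝ := fun n => ∑ j ∈ Finset.range n, b j with hSdef
  have hb0 : ∀ n, 0 ≤ b n := fun n => Real.sqrt_nonneg _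
  have hba : ∀ n, b n ^ 2 = a n := fun n => Real.sq_sqrt (ha n)
  have hS0 : ∀ n, 0 ≤ S n := fun n => Finset.sum_nonneg fun j _ => hb0 j
  have hSsucc : ∀ n, S (n + 1) = S n + b n := fun n => Finset.sum_range_succ b n
  have hkey : ∀ s, N ≤ s → ε ≤ b s * S s := by
    intro s hs
    have := hN s hs
    simpa using not_lt.1 this
  have hSpos : ∀ s, N ≤ s → 0 < S s := by
    intro s hs
    rcases lt_or_eq_of_le (hS0 s) with h | h
    · exact h
    · exfalso; have := hkey s hs; rw [← h] at this; nlinarith [hb0 s]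
  -- growth of S^2
  have hgrow : ∀ s, N ≤ s → S s ^ 2 + 2 * ε ≤ S (s + 1) ^ 2 := by
    intro s hs
    have h1 := hkey s hs
    rw [hSsucc]
    nlinarith [hb0 s, sq_nonneg (b s)]
  have hgrow' : ∀ k : ℕ, S N ^ 2 + 2 * ε * k ≤ S (N + k) ^ 2 := by
    intro k
    induction k with
    | zero => simp
    | succ k ih =>
      have h1 := hgrow (N + k) (Nat.le_add_right _ _)
      have h2 : S N ^ 2 + 2 * ε * k + 2 * ε ≤ S (N + k + 1) ^ 2 := by linarith
      push_cast
      rw [show N + (k + 1) = N + k + 1 from rfl]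
      linarith
  -- log estimate
  have hlog : ∀ s, N ≤ s → ε * (Real.log (S (s + 1)) - Real.log (S s)) ≤ a s := by
    intro s hs
    have hSp := hSpos s hs
    have hSp' : 0 < S (s + 1) := by rw [hSsucc]; positivity
    have hk := hkey s hs
    have h1 : Real.log (S (s + 1)) - Real.log (S s) ≤ b s / S s := by
      have h := Real.log_le_sub_one_of_pos (show (0:ℝ) < S (s+1) / S s by positivity)
      rw [Real.log_div (ne_of_gt hSp') (ne_of_gt hSp)] at h
      calc Real.log (S (s+1)) - Real.log (S s) ≤ S (s+1) / S s - 1 := h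
        _ = b s / S s := by rw [hSsucc]; field_simp; ring
    have h2 : ε * (b s / S s) ≤ a s := by
      rw [← hba s]
      rw [mul_comm, div_mul_eq_mul_div, div_le_iff₀ hSp]
      have h3 := mul_le_mul_of_nonneg_left hk (hb0 s)
      nlinarith
    calc ε * (Real.log (S (s + 1)) - Real.log (S s)) ≤ ε * (b s / S s) :=
          mul_le_mul_of_nonneg_left h1 (le_of_lt hε)
      _ ≤ a s := h2
  -- telescoping
  have htel : ∀ M : ℕ, ε * (Real.log (S (N + M)) - Real.log (S N)) ≤ ∑' n, a n := by
    intro M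
    have h1 : ε * (Real.log (S (N + M)) - Real.log (S N))
        = ∑ k ∈ Finset.range M, ε * (Real.log (S (N + k + 1)) - Real.log (S (N + k))) := by
      rw [← Finset.mul_sum]
      congr 1
      have h := Finset.sum_range_sub (fun k => Real.log (S (N + k))) M
      simp only [Nat.add_zero] at h
      exact h.symm
    rw [h1]
    calc ∑ k ∈ Finset.range M, ε * (Real.log (S (N + k + 1)) - Real.log (S (N + k)))
        ≤ ∑ k ∈ Finset.range M, a (N + k) := by
          apply Finset.sum_le_sum
          intro k _
          exact hlog (N + k) (Nat.le_add_right _ _)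
      _ = ∑ k ∈ Finset.map (addLeftEmbedding N) (Finset.range M), a k := by
          rw [Finset.sum_map]; rfl
      _ ≤ ∑' n, a n := Summable.sum_le_tsum _ (fun i _ => ha i) hsum
  -- bound on S
  set T := ∑' n, a n with hT
  have hSbound : ∀ M : ℕ, S (N + M) ≤ Real.exp ((ε * Real.log (S N) + T) / ε) := by
    intro M
    have h := htel M
    have hSp : 0 < S (N + M) := hSpos _ (Nat.le_add_right _ _)
    rw [← Real.log_le_iff_le_exp hSp, le_div_iff₀ hε]
    nlinarith
  -- contradiction
  obtain ⟨M, hM⟩ := exists_nat_gt ((Real.exp ((ε * Real.log (S N) + T) / ε)) ^ 2 / (2 * ε))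
  have h1 := hgrow' M
  have h2 := hSbound M
  have hexp : (Real.exp ((ε * Real.log (S N) + T) / ε)) ^ 2 < 2 * ε * M := by
    rw [div_lt_iff₀ (by positivity)] at hM; linarith
  nlinarith [sq_nonneg (S N), hS0 (N + M), Real.exp_pos ((ε * Real.log (S N) + T) / ε)]


/-- Weak greedy setup: H a real Hilbert space, 𝒢 a nonempty index set, for
each g orthonormal vectors e₀(g), e₁(g); P(g,f) = ⟨f,e₀(g)⟩² + ⟨f,e₁(g)⟩² and
Π_g f = ⟨f,e₀(g)⟩e₀(g) + ⟨f,e₁(g)⟩e₁(g). With t ∈ (0,1], γ ∈ (0,1], m₀ = m,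
P(g_s, m_{s−1}) ≥ t·sup_g P(g, m_{s−1}) and m_s = m_{s−1} − γ Π_{g_s} m_{s−1}: if m lies in
the closed linear span of the e_l(g), then ‖m_s‖ → 0, equivalently the boosting
approximants γ ∑_{s=1}^{M} Π_{g_s} m_{s−1} converge to m. -/
theorem stmt10 {H : Type*} [NormedAddCommGroup H] [InnerProductSpace ℝ H] [CompleteSpace H]
    {G : Type*} [Nonempty G] (e : G → Fin 2 → H)
    (he_norm : ∀ g l, ‖e g l‖ = 1) (he_orth : ∀ g, ⟪e g 0, e g 1⟫ = 0)
    (P : G → H → ℝ) (hP : ∀ g f, P g f = ⟪f, e g 0⟫ ^ 2 + ⟪f, e g 1⟫ ^ 2)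
    (Pi : G → H → H) (hPi : ∀ g f, Pi g f = ⟪f, e g 0⟫ • e g 0 + ⟪f, e g 1⟫ • e g 1)
    (t γ : ℝ) (ht0 : 0 < t) (ht1 : t ≤ 1) (hγ0 : 0 < γ) (hγ1 : γ ≤ 1)
    (m : H) (mseq : ℕ → H) (gs : ℕ → G)
    (hm0 : mseq 0 = m)
    (hgs : ∀ s : ℕ, t * ⨆ g, P g (mseq s) ≤ P (gs (s + 1)) (mseq s))
    (hrec : ∀ s : ℕ, mseq (s + 1) = mseq s - γ • Pi (gs (s + 1)) (mseq s))
    (hspan : m ∈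
      (Submodule.span ℝ (Set.range fun p : G × Fin 2 => e p.1 p.2)).topologicalClosure) :
    Tendsto (fun s => ‖mseq s‖) atTop (nhds 0) ∧
      Tendsto (fun M : ℕ => γ • ∑ s ∈ Finset.Icc 1 M, Pi (gs s) (mseq (s - 1)))
        atTop (nhds m) := by
  -- inner products with Pi
  have hPinner : ∀ (g : G) (x f : H),
      ⟪x, Pi g f⟫ = ⟪f, e g 0⟫ * ⟪x, e g 0⟫ + ⟪f, e g 1⟫ * ⟪x, e g 1⟫ := by
    intro g x f
    rw [hPi, inner_add_right, real_inner_smul_right, real_inner_smul_right]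
  have he_self : ∀ (g : G) (l : Fin 2), ⟪e g l, e g l⟫ = 1 := by
    intro g l
    rw [real_inner_self_eq_norm_sq, he_norm]; norm_num
  have hPP : ∀ g f, ⟪f, Pi g f⟫ = P g f := by
    intro g f; rw [hPinner, hP]; ring
  have hPe : ∀ (g : G) (f : H), ⟪e g 0, Pi g f⟫ = ⟪f, e g 0⟫ ∧ ⟪e g 1, Pi g f⟫ = ⟪f, e g 1⟫ := by
    intro g f
    constructor
    · rw [hPinner, he_self, he_orth]; ring
    · rw [hPinner, he_self]
      have h01 : ⟪e g 1, e g 0⟫ = 0 := by rw [real_inner_comm]; exact he_orth g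
      rw [h01]; ring
  have hPiNorm : ∀ g f, ‖Pi g f‖ ^ 2 = P g f := by
    intro g f
    rw [← real_inner_self_eq_norm_sq]
    calc ⟪Pi g f, Pi g f⟫
        = ⟪f, e g 0⟫ * ⟪Pi g f, e g 0⟫ + ⟪f, e g 1⟫ * ⟪Pi g f, e g 1⟫ := hPinner g _ f
      _ = ⟪f, e g 0⟫ * ⟪f, e g 0⟫ + ⟪f, e g 1⟫ * ⟪f, e g 1⟫ := by
          have c0 : ⟪Pi g f, e g 0⟫ = ⟪f, e g 0⟫ := by
            rw [real_inner_comm]; exact (hPe g f).1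
          have c1 : ⟪Pi g f, e g 1⟫ = ⟪f, e g 1⟫ := by
            rw [real_inner_comm]; exact (hPe g f).2
          rw [c0, c1]
      _ = P g f := by rw [hP]; ring
  have hPnonneg : ∀ g f, 0 ≤ P g f := by intro g f; rw [hP]; positivity
  have hbessel : ∀ g f, P g f ≤ ‖f‖ ^ 2 := by
    intro g f
    have h1 : ‖f - Pi g f‖ ^ 2 = ‖f‖ ^ 2 - 2 * ⟪f, Pi g f⟫ + ‖Pi g f‖ ^ 2 :=
      norm_sub_sq_real f (Pi g f)
    rw [hPP, hPiNorm] at h1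
    nlinarith [sq_nonneg ‖f - Pi g f‖]
  have hbdd : ∀ f : H, BddAbove (Set.range fun g => P g f) := by
    intro f
    exact ⟨‖f‖ ^ 2, by rintro x ⟨g, rfl⟩; exact hbessel g f⟩
  set a : ℕ → ℝ := fun s => P (gs (s + 1)) (mseq s) with ha_def
  have ha0 : ∀ s, 0 ≤ a s := fun s => hPnonneg _ _
  have hPle : ∀ (g : G) (s : ℕ), t * P g (mseq s) ≤ a s := by
    intro g s
    calc t * P g (mseq s) ≤ t * ⨆ g, P g (mseq s) :=
          mul_le_mul_of_nonneg_left (le_ciSup (hbdd _) g) ht0.le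
      _ ≤ a s := hgs s
  -- norm decrease
  have hstep : ∀ s, ‖mseq (s + 1)‖ ^ 2 = ‖mseq s‖ ^ 2 - γ * (2 - γ) * a s := by
    intro s
    rw [hrec, norm_sub_sq_real, real_inner_smul_right, hPP, norm_smul, mul_pow, hPiNorm,
      Real.norm_eq_abs, sq_abs]
    ring
  have hsq_sum : ∀ n, ‖mseq n‖ ^ 2 = ‖m‖ ^ 2 - γ * (2 - γ) * ∑ s ∈ Finset.range n, a s := by
    intro n
    induction n with
    | zero => simp [hm0]
    | succ n ih => rw [hstep, ih, Finset.sum_range_succ]; ring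
  have hcoef : 0 < γ * (2 - γ) := by nlinarith
  have hsum_le : ∀ n, ∑ s ∈ Finset.range n, a s ≤ ‖m‖ ^ 2 / (γ * (2 - γ)) := by
    intro n
    rw [le_div_iff₀ hcoef]
    have := hsq_sum n
    nlinarith [sq_nonneg ‖mseq n‖]
  have hsummable : Summable a := summable_of_sum_range_le ha0 hsum_le
  have haz : Tendsto a atTop (nhds 0) := hsummable.tendsto_atTop_zero
  -- inner product with fixed e g l tends to 0
  have hinner_e : ∀ (g : G) (l : Fin 2),
      Tendsto (fun s => ⟪mseq s, e g l⟫) atTop (nhds 0) := by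
    intro g l
    have hsq : ∀ s, ⟪mseq s, e g l⟫ ^ 2 ≤ a s / t := by
      intro s
      have h1 : ⟪mseq s, e g l⟫ ^ 2 ≤ P g (mseq s) := by
        have hl : e g l = e g 0 ∨ e g l = e g 1 := by
          fin_cases l
          · exact Or.inl rfl
          · exact Or.inr rfl
        rw [hP]
        rcases hl with h | h <;> rw [h]
        · nlinarith [sq_nonneg (⟪mseq s, e g 1⟫ : ℝ)]
        · nlinarith [sq_nonneg (⟪mseq s, e g 0⟫ : ℝ)]
      have h2 := hPle g s
      rw [le_div_iff₀ ht0]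
      nlinarith
    have h1 : Tendsto (fun s => a s / t) atTop (nhds 0) := by
      simpa using haz.div_const t
    have h2 : Tendsto (fun s => Real.sqrt (a s / t)) atTop (nhds 0) := by
      have h3 := (Real.continuous_sqrt.tendsto 0).comp h1
      simpa [Function.comp_def] using h3
    apply squeeze_zero_norm _ h2
    intro s
    rw [Real.norm_eq_abs, ← Real.sqrt_sq_eq_abs]
    exact Real.sqrt_le_sqrt (hsq s)
  -- inner product with span elements tends to 0
  have hinner_span : ∀ v ∈ Submodule.span ℝ (Set.range fun p : G × Fin 2 => e p.1 p.2),
      Tendsto (fun s => ⟪mseq s, v⟫) atTop (nhds 0) := by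
    intro v hv
    induction hv using Submodule.span_induction with
    | mem x hx =>
      obtain ⟨⟨g, l⟩, rfl⟩ := hx
      exact hinner_e g l
    | zero => simpa using (tendsto_const_nhds : Tendsto (fun _ : ℕ => (0:ℝ)) atTop (nhds 0))
    | add x y hx hy ihx ihy => simpa [inner_add_right] using ihx.add ihy
    | smul c x hx ih =>
      have := ih.const_mul c
      simpa [real_inner_smul_right] using this
  -- norms bounded by the initial norm
  have hnormle : ∀ s, ‖mseq s‖ ≤ ‖m‖ := by
    intro s
    have h1 := hsq_sum s
    have h2 : (0:ℝ) ≤ ∑ j ∈ Finset.range s, a j := Finset.sum_nonneg fun j _ => ha0 j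
    nlinarith [norm_nonneg (mseq s), norm_nonneg m]
  -- inner product with m tends to 0
  have hinner_m : Tendsto (fun s => ⟪mseq s, m⟫) atTop (nhds 0) := by
    rw [Metric.tendsto_atTop]
    intro ε hε
    have hm' : m ∈ closure ((Submodule.span ℝ
        (Set.range fun p : G × Fin 2 => e p.1 p.2)) : Set H) := by
      rw [← Submodule.topologicalClosure_coe]; exact hspan
    obtain ⟨v, hv, hdist⟩ := Metric.mem_closure_iff.1 hm' (ε / (2 * (‖m‖ + 1)))
      (by positivity)
    have h1 := hinner_span v hv
    rw [Metric.tendsto_atTop] at h1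
    obtain ⟨N, hN⟩ := h1 (ε / 2) (by positivity)
    refine ⟨N, fun s hs => ?_⟩
    have h2 := hN s hs
    rw [Real.dist_eq, sub_zero] at h2 ⊢
    have h3 : ⟪mseq s, m⟫ = ⟪mseq s, v⟫ + ⟪mseq s, m - v⟫ := by
      rw [inner_sub_right]; ring
    have h4 : |⟪mseq s, m - v⟫| ≤ ‖mseq s‖ * ‖m - v‖ := abs_real_inner_le_norm _ _
    have h5 : ‖m - v‖ < ε / (2 * (‖m‖ + 1)) := by
      rw [← dist_eq_norm]; exact hdist
    have h6 : ‖mseq s‖ * ‖m - v‖ ≤ ‖m‖ * (ε / (2 * (‖m‖ + 1))) := by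
      apply mul_le_mul (hnormle s) h5.le (norm_nonneg _) (norm_nonneg _)
    have h7 : ‖m‖ * (ε / (2 * (‖m‖ + 1))) < ε / 2 := by
      have hm1 : (‖m‖ + 1) ≠ 0 := by positivity
      rw [show ‖m‖ * (ε / (2 * (‖m‖ + 1))) = ε / 2 * (‖m‖ / (‖m‖ + 1)) by
        field_simp]
      have h8 : ‖m‖ / (‖m‖ + 1) < 1 := by
        rw [div_lt_one (by positivity)]; linarith [norm_nonneg m]
      nlinarith
    calc |⟪mseq s, m⟫| ≤ |⟪mseq s, v⟫| + |⟪mseq s, m - v⟫| := by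
          rw [h3]; exact abs_add_le _ _
      _ < ε / 2 + ε / 2 := by
          apply add_lt_add_of_lt_of_le h2
          linarith
      _ = ε := by ring
  -- telescoping
  have htel : ∀ n, m - mseq n = γ • ∑ j ∈ Finset.range n, Pi (gs (j + 1)) (mseq j) := by
    intro n
    induction n with
    | zero => simp [hm0]
    | succ n ih =>
      rw [Finset.sum_range_succ, smul_add, ← ih, hrec]
      abel
  -- Cauchy-Schwarz type bound
  have hCS : ∀ (g : G) (x y : H),
      |⟪x, Pi g y⟫| ≤ Real.sqrt (P g y) * Real.sqrt (P g x) := by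
    intro g x y
    rw [hPinner]
    set A := (⟪y, e g 0⟫ : ℝ); set B := (⟪y, e g 1⟫ : ℝ)
    set C := (⟪x, e g 0⟫ : ℝ); set D := (⟪x, e g 1⟫ : ℝ)
    have h : (A * C + B * D) ^ 2 ≤ (A ^ 2 + B ^ 2) * (C ^ 2 + D ^ 2) := by
      nlinarith [sq_nonneg (A * D - B * C)]
    rw [hP, hP, ← Real.sqrt_mul (by positivity), ← Real.sqrt_sq_eq_abs]
    exact Real.sqrt_le_sqrt h
  -- sqrt of P bounded
  have hsqrtP : ∀ (g : G) (s : ℕ),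
      Real.sqrt (P g (mseq s)) ≤ Real.sqrt (a s) / Real.sqrt t := by
    intro g s
    rw [show Real.sqrt (a s) / Real.sqrt t = Real.sqrt (a s / t) from
      (Real.sqrt_div (ha0 s) t).symm]
    apply Real.sqrt_le_sqrt
    rw [le_div_iff₀ ht0]
    have := hPle g s
    linarith
  -- bound on the cross term
  have hcross : ∀ s : ℕ, |⟪mseq s, m - mseq s⟫| ≤
      γ / Real.sqrt t * (Real.sqrt (a s) * ∑ j ∈ Finset.range s, Real.sqrt (a j)) := by
    intro s
    have h1 : ⟪mseq s, m - mseq s⟫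
        = γ * ∑ j ∈ Finset.range s, ⟪mseq s, Pi (gs (j + 1)) (mseq j)⟫ := by
      rw [htel s, real_inner_smul_right, inner_sum]
    rw [h1, abs_mul, abs_of_pos hγ0]
    have h2 : |∑ j ∈ Finset.range s, ⟪mseq s, Pi (gs (j + 1)) (mseq j)⟫|
        ≤ ∑ j ∈ Finset.range s, Real.sqrt (a j) * (Real.sqrt (a s) / Real.sqrt t) := by
      calc |∑ j ∈ Finset.range s, ⟪mseq s, Pi (gs (j + 1)) (mseq j)⟫|
          ≤ ∑ j ∈ Finset.range s, |⟪mseq s, Pi (gs (j + 1)) (mseq j)⟫| :=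
            Finset.abs_sum_le_sum_abs _ _
        _ ≤ ∑ j ∈ Finset.range s, Real.sqrt (a j) * (Real.sqrt (a s) / Real.sqrt t) := by
            apply Finset.sum_le_sum
            intro j _
            calc |⟪mseq s, Pi (gs (j + 1)) (mseq j)⟫|
                ≤ Real.sqrt (P (gs (j + 1)) (mseq j)) * Real.sqrt (P (gs (j + 1)) (mseq s)) :=
                  hCS _ _ _
              _ ≤ Real.sqrt (a j) * (Real.sqrt (a s) / Real.sqrt t) := by
                  apply mul_le_mul _ (hsqrtP _ s) (Real.sqrt_nonneg _) (Real.sqrt_nonneg _)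
                  exact le_of_eq rfl
    calc γ * |∑ j ∈ Finset.range s, ⟪mseq s, Pi (gs (j + 1)) (mseq j)⟫|
        ≤ γ * ∑ j ∈ Finset.range s, Real.sqrt (a j) * (Real.sqrt (a s) / Real.sqrt t) :=
          mul_le_mul_of_nonneg_left h2 hγ0.le
      _ = γ / Real.sqrt t * (Real.sqrt (a s) * ∑ j ∈ Finset.range s, Real.sqrt (a j)) := by
          rw [← Finset.sum_mul]; ring
  -- antitone norms
  have hanti : Antitone fun s => ‖mseq s‖ := by
    apply antitone_nat_of_succ_le
    intro s
    have h1 := hstep s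
    have h2 : 0 ≤ γ * (2 - γ) * a s := mul_nonneg hcoef.le (ha0 s)
    nlinarith [norm_nonneg (mseq (s + 1)), norm_nonneg (mseq s)]
  have hbb : BddBelow (Set.range fun s => ‖mseq s‖) :=
    ⟨0, by rintro x ⟨s, rfl⟩; exact norm_nonneg _⟩
  have htendL : Tendsto (fun s => ‖mseq s‖) atTop (nhds (⨅ s, ‖mseq s‖)) :=
    tendsto_atTop_ciInf hanti hbb
  set L := ⨅ s, ‖mseq s‖ with hLdef
  have hL0 : 0 ≤ L := le_ciInf fun s => norm_nonneg _
  have hLle : ∀ s, L ≤ ‖mseq s‖ := fun s => ciInf_le hbb s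
  have hsqrt_t_pos : 0 < Real.sqrt t := Real.sqrt_pos.2 ht0
  have hLzero : L = 0 := by
    by_contra hne
    have hLpos : 0 < L := lt_of_le_of_ne hL0 (Ne.symm hne)
    have hev : ∀ᶠ s in atTop, |⟪mseq s, m⟫| < L ^ 2 / 2 := by
      have h := hinner_m
      rw [Metric.tendsto_atTop] at h
      obtain ⟨N, hN⟩ := h (L ^ 2 / 2) (by positivity)
      rw [eventually_atTop]
      exact ⟨N, fun s hs => by have := hN s hs; rwa [Real.dist_eq, sub_zero] at this⟩
    have hεpos : 0 < L ^ 2 / 2 * Real.sqrt t / γ :=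
      div_pos (mul_pos (by positivity) hsqrt_t_pos) hγ0
    have hfreq := stmt10_freq a ha0 hsummable hεpos
    obtain ⟨s, hs1, hs2⟩ := (hfreq.and_eventually hev).exists
    have h1 : ‖mseq s‖ ^ 2 = ⟪mseq s, m⟫ + ⟪mseq s, mseq s - m⟫ := by
      rw [inner_sub_right, real_inner_self_eq_norm_sq]; ring
    have h2 : ⟪mseq s, mseq s - m⟫ = -⟪mseq s, m - mseq s⟫ := by
      rw [← inner_neg_right]; congr 1; abel
    have h3 := hcross s
    have h4 : γ / Real.sqrt t * (Real.sqrt (a s) * ∑ j ∈ Finset.range s, Real.sqrt (a j))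
        < γ / Real.sqrt t * (L ^ 2 / 2 * Real.sqrt t / γ) :=
      mul_lt_mul_of_pos_left hs1 (div_pos hγ0 hsqrt_t_pos)
    have h5 : γ / Real.sqrt t * (L ^ 2 / 2 * Real.sqrt t / γ) = L ^ 2 / 2 := by
      field_simp
    have h6 : L ^ 2 ≤ ‖mseq s‖ ^ 2 := by nlinarith [hLle s, norm_nonneg (mseq s)]
    have h7 : |⟪mseq s, m - mseq s⟫| < L ^ 2 / 2 := by
      rw [h5] at h4; linarith
    have h8 := le_abs_self (⟪mseq s, m⟫ : ℝ)
    have h9 := neg_abs_le (⟪mseq s, m - mseq s⟫ : ℝ)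
    have h10 := le_abs_self (⟪mseq s, m - mseq s⟫ : ℝ)
    linarith [h1, h2.symm ▸ h1]
  have hpart1 : Tendsto (fun s => ‖mseq s‖) atTop (nhds 0) := hLzero ▸ htendL
  have hm_tend : Tendsto mseq atTop (nhds 0) := by
    rw [tendsto_zero_iff_norm_tendsto_zero]; exact hpart1
  refine ⟨hpart1, ?_⟩
  have hpart2 : ∀ M : ℕ, γ • ∑ s ∈ Finset.Icc 1 M, Pi (gs s) (mseq (s - 1)) = m - mseq M := by
    intro M
    rw [htel M]
    congr 1
    rw [show Finset.Icc 1 M = Finset.Ico 1 (M + 1) by rw [Finset.Ico_add_one_right_eq_Icc],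
      Finset.sum_Ico_eq_sum_range]
    simp only [Nat.add_sub_cancel]
    apply Finset.sum_congr rfl
    intro i _
    rw [show 1 + i = i + 1 by omega]
    simp
  have hfinal := (tendsto_const_nhds : Tendsto (fun _ : ℕ => m) atTop (nhds m)).sub hm_tend
  rw [sub_zero] at hfinal
  exact hfinal.congr fun M => (hpart2 M).symm
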